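/- For s ∈ (0,1), the function w_{1,s}(x₁,x₂) = (1/(s²−1)) (√(x₁²+x₂²)+x₁)^s (s√(x₁²+x₂²) − x₁) satisfies the degenerate elliptic equation ∂₁(x₂^{1−2s} ∂₁ w) + ∂₂(x₂^{1−2s} ∂₂ w) = 0 at every point of the open upper half-plane {(x₁,x₂) ∈ ℝ² : x₂ > 0}. -/

import Mathlib

open Real

/-- The model solution `w_{1,s}` of the fractional thin obstacle problem. -/
noncomputable def w1 (s x₁ x₂ : ℝ) : ℝ :=
  (1 / (s ^ 2 - 1)) * (Real.sqrt (x₁ ^ 2 + x₂ ^ 2) + x₁) ^ s *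
    (s * Real.sqrt (x₁ ^ 2 + x₂ ^ 2) - x₁)

lemma aux_P_pos (a b : ℝ) (hb : b ≠ 0) : 0 < Real.sqrt (a^2+b^2) + a := by
  have h1 : |a| < Real.sqrt (a^2+b^2) := by
    rw [← Real.sqrt_sq_eq_abs]
    exact Real.sqrt_lt_sqrt (sq_nonneg a) (by nlinarith [sq_pos_of_ne_zero hb])
  have := neg_abs_le a
  linarith

lemma aux_hasDerivAt_sqrt (a b : ℝ) (hb : b ≠ 0) :
    HasDerivAt (fun t => Real.sqrt (t^2+b^2)) (a / Real.sqrt (a^2+b^2)) a := by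
  have h0 : a^2 + b^2 ≠ 0 := by positivity
  have h1 : HasDerivAt (fun t : ℝ => t^2 + b^2) (2*a) a := by
    simpa using (hasDerivAt_pow 2 a).add_const (b^2)
  have h2 := h1.sqrt h0
  convert h2 using 1
  have hs : 0 < Real.sqrt (a^2+b^2) := Real.sqrt_pos.2 (by positivity)
  field_simp

lemma aux_hasDerivAt_sqrt' (a b : ℝ) (hb : b ≠ 0) :
    HasDerivAt (fun t => Real.sqrt (a^2+t^2)) (b / Real.sqrt (a^2+b^2)) b := by
  have h0 : a^2 + b^2 ≠ 0 := by positivity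
  have h1 : HasDerivAt (fun t : ℝ => a^2 + t^2) (2*b) b := by
    simpa using ((hasDerivAt_pow 2 b).const_add (a^2))
  have h2 := h1.sqrt h0
  convert h2 using 1
  have hs : 0 < Real.sqrt (a^2+b^2) := Real.sqrt_pos.2 (by positivity)
  field_simp

/-- first partial derivative of w1 -/
lemma hasDerivAt_w1_fst (s x₂ : ℝ) (hx₂ : x₂ ≠ 0) (hs : s^2 - 1 ≠ 0) (a : ℝ) :
    HasDerivAt (fun t => w1 s t x₂) ((Real.sqrt (a^2+x₂^2) + a) ^ s) a := by
  set r := Real.sqrt (a^2+x₂^2) with hrdef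
  have hr : 0 < r := Real.sqrt_pos.2 (by positivity)
  have hP : 0 < r + a := aux_P_pos a x₂ hx₂
  have hr' := aux_hasDerivAt_sqrt a x₂ hx₂
  have hP' : HasDerivAt (fun t => Real.sqrt (t^2+x₂^2) + t) (a/r + 1) a :=
    hr'.add (hasDerivAt_id a)
  have hf : HasDerivAt (fun t => (Real.sqrt (t^2+x₂^2) + t) ^ s)
      ((a/r + 1) * s * (r + a) ^ (s-1)) a := hP'.rpow_const (Or.inl hP.ne')
  have hg : HasDerivAt (fun t => s * Real.sqrt (t^2+x₂^2) - t) (s * (a/r) - 1) a :=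
    (hr'.const_mul s).sub (hasDerivAt_id a)
  have hfg := ((hf.const_mul (1/(s^2-1))).mul hg)
  refine hfg.congr_deriv ?_
  have hPs : (r + a) ^ s = (r + a) ^ (s-1) * (r + a) := by
    rw [← Real.rpow_add_one hP.ne']; norm_num
  rw [hPs]
  field_simp
  ring

/-- second partial derivative of w1 -/
lemma hasDerivAt_w1_snd (s x₁ : ℝ) (hs : s^2 - 1 ≠ 0) (b : ℝ) (hb : b ≠ 0) :
    HasDerivAt (fun t => w1 s x₁ t)
      (s/(s-1) * b * (Real.sqrt (x₁^2+b^2) + x₁) ^ (s-1)) b := by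
  set r := Real.sqrt (x₁^2+b^2) with hrdef
  have hr : 0 < r := Real.sqrt_pos.2 (by positivity)
  have hP : 0 < r + x₁ := aux_P_pos x₁ b hb
  have hr' := aux_hasDerivAt_sqrt' x₁ b hb
  have hP' : HasDerivAt (fun t => Real.sqrt (x₁^2+t^2) + x₁) (b/r) b :=
    hr'.add_const x₁
  have hf : HasDerivAt (fun t => (Real.sqrt (x₁^2+t^2) + x₁) ^ s)
      ((b/r) * s * (r + x₁) ^ (s-1)) b := hP'.rpow_const (Or.inl hP.ne')
  have hg : HasDerivAt (fun t => s * Real.sqrt (x₁^2+t^2) - x₁) (s * (b/r)) b :=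
    (hr'.const_mul s).sub_const x₁
  have hfg := ((hf.const_mul (1/(s^2-1))).mul hg)
  refine hfg.congr_deriv ?_
  have hPs : (r + x₁) ^ s = (r + x₁) ^ (s-1) * (r + x₁) := by
    rw [← Real.rpow_add_one hP.ne']; norm_num
  have hs1 : s - 1 ≠ 0 := by
    intro h; apply hs; have : s = 1 := by linarith
    rw [this]; ring
  rw [hPs]
  field_simp
  ring

/-- `w_{1,s}` solves `∂₁(x₂^{1-2s} ∂₁ w) + ∂₂(x₂^{1-2s} ∂₂ w) = 0` in the open
upper half-plane. -/
theorem stmt0 (s : ℝ) (hs : s ∈ Set.Ioo (0 : ℝ) 1) (x₁ x₂ : ℝ) (hx₂ : 0 < x₂) :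
    deriv (fun t => x₂ ^ (1 - 2 * s) * deriv (fun a => w1 s a x₂) t) x₁
      + deriv (fun t => t ^ (1 - 2 * s) * deriv (fun b => w1 s x₁ b) t) x₂ = 0 := by
  obtain ⟨hs0, hs1⟩ := hs
  have hs2 : s^2 - 1 ≠ 0 := by nlinarith
  have hs1' : s - 1 ≠ 0 := by intro h; nlinarith
  set r := Real.sqrt (x₁^2+x₂^2) with hrdef
  have hr : 0 < r := Real.sqrt_pos.2 (by positivity)
  have hr2 : r^2 = x₁^2 + x₂^2 := Real.sq_sqrt (by positivity)
  have hP : 0 < r + x₁ := aux_P_pos x₁ x₂ hx₂.ne'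
  -- first term
  have e1 : (fun t => x₂ ^ (1 - 2*s) * deriv (fun a => w1 s a x₂) t)
      = fun t => x₂ ^ (1 - 2*s) * (Real.sqrt (t^2+x₂^2) + t) ^ s := by
    funext t
    rw [(hasDerivAt_w1_fst s x₂ hx₂.ne' hs2 t).deriv]
  have hP1 : HasDerivAt (fun t => Real.sqrt (t^2+x₂^2) + t) (x₁/r + 1) x₁ :=
    (aux_hasDerivAt_sqrt x₁ x₂ hx₂.ne').add (hasDerivAt_id x₁)
  have hD1 : HasDerivAt (fun t => x₂ ^ (1 - 2*s) * (Real.sqrt (t^2+x₂^2) + t) ^ s)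
      (x₂ ^ (1 - 2*s) * ((x₁/r + 1) * s * (r + x₁) ^ (s-1))) x₁ :=
    (hP1.rpow_const (Or.inl hP.ne')).const_mul _
  -- second term: rewrite eventually
  have e2 : (fun t => t ^ (1 - 2*s) * deriv (fun b => w1 s x₁ b) t)
      =ᶠ[nhds x₂] fun t => t ^ (1 - 2*s) *
        (s/(s-1) * t * (Real.sqrt (x₁^2+t^2) + x₁) ^ (s-1)) := by
    filter_upwards [eventually_ne_nhds hx₂.ne'] with t ht
    rw [(hasDerivAt_w1_snd s x₁ hs2 t ht).deriv]
  have hpow : HasDerivAt (fun t : ℝ => t ^ (1 - 2*s))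
      ((1 - 2*s) * x₂ ^ (1 - 2*s - 1)) x₂ :=
    Real.hasDerivAt_rpow_const (Or.inl hx₂.ne')
  have hlin : HasDerivAt (fun t : ℝ => s/(s-1) * t) (s/(s-1)) x₂ := by
    simpa using (hasDerivAt_id x₂).const_mul (s/(s-1))
  have hP2 : HasDerivAt (fun t => (Real.sqrt (x₁^2+t^2) + x₁) ^ (s-1))
      ((x₂/r) * (s-1) * (r + x₁) ^ (s-1-1)) x₂ :=
    ((aux_hasDerivAt_sqrt' x₁ x₂ hx₂.ne').add_const x₁).rpow_const (Or.inl hP.ne')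
  have hD2 : HasDerivAt (fun t => t ^ (1 - 2*s) *
      (s/(s-1) * t * (Real.sqrt (x₁^2+t^2) + x₁) ^ (s-1)))
      ((1 - 2*s) * x₂ ^ (1 - 2*s - 1) * (s/(s-1) * x₂ * (r + x₁) ^ (s-1))
        + x₂ ^ (1 - 2*s) * (s/(s-1) * (r + x₁) ^ (s-1)
          + s/(s-1) * x₂ * ((x₂/r) * (s-1) * (r + x₁) ^ (s-1-1)))) x₂ :=
    hpow.mul (hlin.mul hP2)
  rw [e1, hD1.deriv, Filter.EventuallyEq.deriv_eq e2, hD2.deriv]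
  -- algebra
  have hA : x₂ ^ (1 - 2*s) = x₂ ^ (1 - 2*s - 1) * x₂ := by
    rw [← Real.rpow_add_one hx₂.ne']; congr 1; ring
  have hB1 : (r + x₁) ^ (s - 1) = (r + x₁) ^ (s-1-1) * (r + x₁) := by
    rw [← Real.rpow_add_one hP.ne']; congr 1; ring
  rw [hA, hB1]
  set A := x₂ ^ (1 - 2*s - 1)
  set B := (r + x₁) ^ (s-1-1)
  have hx2sq : x₂^2 = r^2 - x₁^2 := by rw [hr2]; ring
  field_simp
  linear_combination (A * B * x₂ * (-s + s^2)) * hx2sq
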